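/- arXiv:1104.4439 — 7 statements merged into one kernel-verified Lean document; each statement's English description precedes it below -/
import Mathlib

section
/- Let A and B be abelian groups and let α, β, γ : A → B be injective maps such that for all x, y, z ∈ A, α(x) + β(y) + γ(z) = 0 if and only if z = x + y. Then there exist an injective group homomorphism φ : A → B and elements a, b ∈ B such that α(x) = φ(x) + a, β(x) = φ(x) + b, and γ(x) = −φ(x) − a − b for all x ∈ A. -/
theorem stmt_0 {A B : Type*} [AddCommGroup A] [AddCommGroup B]
    (α β γ : A → B) (hα : Function.Injective α) (hβ : Function.Injective β)
    (hγ : Function.Injective γ)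
    (h : ∀ x y z : A, α x + β y + γ z = 0 ↔ z = x + y) :
    ∃ (φ : A →+ B) (a b : B), Function.Injective φ ∧
      (∀ x, α x = φ x + a) ∧ (∀ x, β x = φ x + b) ∧ (∀ x, γ x = -φ x - a - b) := by
  have eq1 : ∀ x : A, α x + β 0 + γ x = 0 := fun x => (h x 0 x).mpr (by simp)
  have eq2 : ∀ y : A, α 0 + β y + γ y = 0 := fun y => (h 0 y y).mpr (by simp)
  have eq3 : ∀ x y : A, α x + β y + γ (x + y) = 0 := fun x y => (h x y _).mpr rfl
  have hβα : ∀ y : A, β y = α y + β 0 - α 0 := by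
    intro y
    have key : α y + β 0 = α 0 + β y := add_right_cancel ((eq1 y).trans (eq2 y).symm)
    rw [eq_sub_iff_add_eq, add_comm (β y)]
    exact key.symm
  have hadd : ∀ x y : A, α (x + y) = α x + α y - α 0 := by
    intro x y
    have k : α (x + y) + β 0 = α x + β y := add_right_cancel ((eq1 (x + y)).trans (eq3 x y).symm)
    rw [hβα y] at k
    have := eq_sub_of_add_eq k
    rw [this]; abel
  refine ⟨AddMonoidHom.mk' (fun x => α x - α 0) (fun x y => by simp only [hadd]; abel),
    α 0, β 0, ?_, ?_, ?_, ?_⟩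
  · intro x y hxy
    simp only [AddMonoidHom.mk'_apply, sub_left_inj] at hxy
    exact hα hxy
  · intro x; simp
  · intro x
    simp only [AddMonoidHom.mk'_apply]
    rw [hβα x]; abel
  · intro x
    simp only [AddMonoidHom.mk'_apply]
    have : γ x = -(α x + β 0) := eq_neg_of_add_eq_zero_right (eq1 x)
    rw [this]; abel
end

section
/- In the projective plane over an algebraically closed field K of characteristic p (p = 0 or p > n), suppose three n-element subsets Λ₁ ⊆ {(ξ,0,1) : ξ ∈ L₁}, Λ₂ ⊆ {(0,η,1) : η ∈ L₂}, Λ₃ ⊆ {(1,1,ζ) : ζ ∈ L₃} form a dual 3-net (every line through a point of one component and a point of another meets the third in exactly one point). Then three points (1,0,ξ), (0,1,η), (1,1,ζ) are collinear iff ζ = ξ + η, and L₁ = L₂ = L₃ is an additive subgroup of K of order n; hence n is a power of p, contradicting p > n. Therefore no dual 3-net of order n lies on three concurrent lines when p = 0 or p > n. -/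
/-- No dual 3-net of order `n ≥ 2` lies on three concurrent lines when `p = 0` or `p > n`.
The three lines are `Y = 0`, `X = 0`, `X − Y = 0`; points of the components are
`(1,0,ξ)`, `(0,1,η)`, `(1,1,ζ)` and collinearity amounts to the vanishing of the
determinant, i.e. `ζ = ξ + η`. -/
theorem stmt_4 {K : Type*} [Field K] [IsAlgClosed K] (p n : ℕ) [CharP K p]
    (hp : p = 0 ∨ n < p) (hn : 2 ≤ n)
    (L₁ L₂ L₃ : Finset K)
    (h₁ : L₁.card = n) (h₂ : L₂.card = n) (h₃ : L₃.card = n)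
    (net₁₂ : ∀ ξ ∈ L₁, ∀ η ∈ L₂, ∃! ζ, ζ ∈ L₃ ∧
      Matrix.det !![1, 0, ξ; 0, 1, η; 1, 1, ζ] = 0)
    (net₁₃ : ∀ ξ ∈ L₁, ∀ ζ ∈ L₃, ∃! η, η ∈ L₂ ∧
      Matrix.det !![1, 0, ξ; 0, 1, η; 1, 1, ζ] = 0)
    (net₂₃ : ∀ η ∈ L₂, ∀ ζ ∈ L₃, ∃! ξ, ξ ∈ L₁ ∧
      Matrix.det !![1, 0, ξ; 0, 1, η; 1, 1, ζ] = 0) :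
    (∀ ξ η ζ : K, Matrix.det !![1, 0, ξ; 0, 1, η; 1, 1, ζ] = 0 ↔ ζ = ξ + η) ∧ False := by
  have hdet : ∀ ξ η ζ : K, Matrix.det !![1, 0, ξ; 0, 1, η; 1, 1, ζ] = 0 ↔ ζ = ξ + η := by
    intro ξ η ζ
    simp [Matrix.det_fin_three, Matrix.vecHead, Matrix.vecTail]
    constructor
    · intro h; linear_combination h
    · intro h; linear_combination h
  refine ⟨hdet, ?_⟩
  classical
  obtain ⟨ξ₀, hξ₀, ξ₁, hξ₁, hne⟩ := Finset.one_lt_card.mp (by omega : 1 < L₁.card)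
  obtain ⟨η₀, hη₀⟩ := Finset.card_pos.mp (by omega : 0 < L₂.card)
  set g := ξ₁ - ξ₀ with hgdef
  have hg : g ≠ 0 := sub_ne_zero.mpr (Ne.symm hne)
  have step : ∀ η ∈ L₂, η + g ∈ L₂ := by
    intro η hη
    obtain ⟨ζ, ⟨hζ₃, hζd⟩, -⟩ := net₁₂ ξ₁ hξ₁ η hη
    rw [hdet] at hζd
    obtain ⟨η', ⟨hη'₂, hd'⟩, -⟩ := net₁₃ ξ₀ hξ₀ ζ hζ₃
    rw [hdet] at hd'
    have : η' = η + g := by rw [hgdef]; linear_combination hζd - hd'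
    rwa [← this]
  have iter : ∀ k : ℕ, η₀ + k • g ∈ L₂ := by
    intro k
    induction k with
    | zero => simpa using hη₀
    | succ k ih =>
      have := step _ ih
      rwa [succ_nsmul, ← add_assoc]
  have hcast : ∀ k ≤ n, ∀ l ≤ n, (k : K) = (l : K) → k = l := by
    intro k hk l hl h
    have hm := (CharP.natCast_eq_natCast K p).mp h
    simp only [Nat.ModEq] at hm
    rcases hp with hp | hp
    · subst hp; simpa using hm
    · rwa [Nat.mod_eq_of_lt (lt_of_le_of_lt hk hp),
        Nat.mod_eq_of_lt (lt_of_le_of_lt hl hp)] at hm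
  have hsub : (Finset.range (n + 1)).image (fun k => η₀ + k • g) ⊆ L₂ := by
    intro x hx
    simp only [Finset.mem_image, Finset.mem_range] at hx
    obtain ⟨k, -, rfl⟩ := hx
    exact iter k
  have hcard : ((Finset.range (n + 1)).image (fun k => η₀ + k • g)).card = n + 1 := by
    rw [Finset.card_image_of_injOn, Finset.card_range]
    intro k hk l hl h
    simp only [Finset.coe_range, Set.mem_Iio] at hk hl
    have h1 : (k : K) * g = (l : K) * g := by
      have := add_left_cancel h
      rwa [nsmul_eq_mul, nsmul_eq_mul] at this
    have h2 : (k : K) = (l : K) := mul_right_cancel₀ hg h1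
    exact hcast k (by omega) l (by omega) h2
  have := Finset.card_le_card hsub
  omega
end

section
/- Every triangular dual 3-net of order n over an algebraically closed field K realizes a finite cyclic group; more precisely, if L₁, L₂, L₃ ⊆ K* are n-element subsets with 1 ∈ L₁, 1 ∈ L₂ and the property that for ξ ∈ L₁, ζ ∈ L₃ one always has ξζ ∈ L₂, and every element of L₂ factors uniquely this way (the dual 3-net condition), then L₁ = L₂ = L₃ = L where L is a finite multiplicative subgroup of K*, hence cyclic of order n. -/
/-- Every triangular dual 3-net of order `n` realizes a finite cyclic group. -/
theorem stmt_6 {K : Type*} [Field K] [IsAlgClosed K] (n : ℕ)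
    (L₁ L₂ L₃ : Finset Kˣ)
    (h₁ : L₁.card = n) (h₂ : L₂.card = n) (h₃ : L₃.card = n)
    (e₁ : (1 : Kˣ) ∈ L₁) (e₂ : (1 : Kˣ) ∈ L₂)
    (net₁₃ : ∀ ξ ∈ L₁, ∀ ζ ∈ L₃, ξ * ζ ∈ L₂)
    (net₁₂ : ∀ ξ ∈ L₁, ∀ η ∈ L₂, ξ⁻¹ * η ∈ L₃)
    (net₂₃ : ∀ η ∈ L₂, ∀ ζ ∈ L₃, η * ζ⁻¹ ∈ L₁) :
    L₁ = L₂ ∧ L₂ = L₃ ∧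
      ∃ H : Subgroup Kˣ, (L₁ : Set Kˣ) = (H : Set Kˣ) ∧ IsCyclic H ∧ Nat.card H = n := by
  -- L₂ ⊆ L₃
  have h23 : L₂ ⊆ L₃ := fun η hη => by simpa using net₁₂ 1 e₁ η hη
  -- L₃ ⊆ L₂
  have h32 : L₃ ⊆ L₂ := fun ζ hζ => by simpa using net₁₃ 1 e₁ ζ hζ
  have hL23 : L₂ = L₃ := Finset.Subset.antisymm h23 h32
  have e₃ : (1 : Kˣ) ∈ L₃ := h23 e₂
  -- L₂ ⊆ L₁
  have h21 : L₂ ⊆ L₁ := fun η hη => by simpa using net₂₃ η hη 1 e₃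
  have hL12 : L₁ = L₂ := (Finset.eq_of_subset_of_card_le h21 (h₁ ▸ h₂.ge)).symm
  refine ⟨hL12, hL23, ?_⟩
  have mulmem : ∀ a ∈ L₁, ∀ b ∈ L₁, a * b ∈ L₁ := by
    intro a ha b hb
    have := net₁₃ a ha b (hL23 ▸ hL12 ▸ hb)
    rwa [hL12]
  have invmem : ∀ a ∈ L₁, a⁻¹ ∈ L₁ := by
    intro a ha
    have := net₁₂ a ha 1 e₂
    simp only [mul_one] at this
    rwa [hL12, hL23]
  refine ⟨{ carrier := ↑L₁,
            one_mem' := e₁,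
            mul_mem' := fun ha hb => mulmem _ ha _ hb,
            inv_mem' := fun ha => invmem _ ha }, rfl, ?_, ?_⟩
  · have : Finite (↑(↑L₁ : Set Kˣ)) := L₁.finite_toSet.to_subtype
    exact subgroup_units_cyclic _
  · simpa [Nat.card_coe_set_eq, Set.ncard_coe_finset] using h₁
end

section
/- Let F be an abelian group and let Λ₁, Λ₂, Λ₃ ⊆ F be finite subsets of the same cardinality n ≥ 1 such that: for all A ∈ Λ₁, B ∈ Λ₂ there is C ∈ Λ₃ with A + B + C = 0; for all A ∈ Λ₁, C ∈ Λ₃ there is B ∈ Λ₂ with A + B + C = 0; and for all B ∈ Λ₂, C ∈ Λ₃ there is A ∈ Λ₁ with A + B + C = 0. Then there exist a subgroup T ≤ F of order n and elements g₁, g₂, g₃ ∈ F with g₁ + g₂ + g₃ = 0 such that Λᵢ = T + gᵢ for i = 1, 2, 3. -/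
theorem stmt_8 {F : Type*} [AddCommGroup F] (n : ℕ) (hn : 1 ≤ n)
    (Λ₁ Λ₂ Λ₃ : Finset F)
    (h₁ : Λ₁.card = n) (h₂ : Λ₂.card = n) (h₃ : Λ₃.card = n)
    (net₁₂ : ∀ A ∈ Λ₁, ∀ B ∈ Λ₂, ∃ C ∈ Λ₃, A + B + C = 0)
    (net₁₃ : ∀ A ∈ Λ₁, ∀ C ∈ Λ₃, ∃ B ∈ Λ₂, A + B + C = 0)
    (net₂₃ : ∀ B ∈ Λ₂, ∀ C ∈ Λ₃, ∃ A ∈ Λ₁, A + B + C = 0) :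
    ∃ (T : AddSubgroup F) (g₁ g₂ g₃ : F), Nat.card T = n ∧ g₁ + g₂ + g₃ = 0 ∧
      (Λ₁ : Set F) = (· + g₁) '' (T : Set F) ∧
      (Λ₂ : Set F) = (· + g₂) '' (T : Set F) ∧
      (Λ₃ : Set F) = (· + g₃) '' (T : Set F) := by
  obtain ⟨a₀, ha₀⟩ : Λ₁.Nonempty := Finset.card_pos.mp (by rw [h₁]; exact hn)
  obtain ⟨b₀, hb₀⟩ : Λ₂.Nonempty := Finset.card_pos.mp (by rw [h₂]; exact hn)
  have m12 : ∀ A ∈ Λ₁, ∀ B ∈ Λ₂, -(A + B) ∈ Λ₃ := by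
    intro A hA B hB
    obtain ⟨C, hC, h⟩ := net₁₂ A hA B hB
    have e : -(A + B) = C := by
      have : C + (A + B) = 0 := by rw [← h]; abel
      exact neg_eq_of_add_eq_zero_left this
    rwa [e]
  have m13 : ∀ A ∈ Λ₁, ∀ C ∈ Λ₃, -(A + C) ∈ Λ₂ := by
    intro A hA C hC
    obtain ⟨B, hB, h⟩ := net₁₃ A hA C hC
    have e : -(A + C) = B := by
      have : B + (A + C) = 0 := by rw [← h]; abel
      exact neg_eq_of_add_eq_zero_left this
    rwa [e]
  have m23 : ∀ B ∈ Λ₂, ∀ C ∈ Λ₃, -(B + C) ∈ Λ₁ := by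
    intro B hB C hC
    obtain ⟨A, hA, h⟩ := net₂₃ B hB C hC
    have e : -(B + C) = A := by
      have : A + (B + C) = 0 := by rw [← h]; abel
      exact neg_eq_of_add_eq_zero_left this
    rwa [e]
  set c₀ : F := -(a₀ + b₀) with hc
  have hc₀ : c₀ ∈ Λ₃ := m12 _ ha₀ _ hb₀
  -- translate transfer lemmas
  have L12 : ∀ x, x + a₀ ∈ Λ₁ → x + b₀ ∈ Λ₂ := by
    intro x hx
    have h1 : -((x + a₀) + b₀) ∈ Λ₃ := m12 _ hx _ hb₀
    have h2 : -(a₀ + -((x + a₀) + b₀)) ∈ Λ₂ := m13 _ ha₀ _ h1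
    have e : -(a₀ + -((x + a₀) + b₀)) = x + b₀ := by abel
    rwa [e] at h2
  have L21 : ∀ x, x + b₀ ∈ Λ₂ → x + a₀ ∈ Λ₁ := by
    intro x hx
    have h1 : -(a₀ + (x + b₀)) ∈ Λ₃ := m12 _ ha₀ _ hx
    have h2 : -(b₀ + -(a₀ + (x + b₀))) ∈ Λ₁ := m23 _ hb₀ _ h1
    have e : -(b₀ + -(a₀ + (x + b₀))) = x + a₀ := by abel
    rwa [e] at h2
  have L13 : ∀ x, x + a₀ ∈ Λ₁ → -x + c₀ ∈ Λ₃ := by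
    intro x hx
    have h1 : -((x + a₀) + b₀) ∈ Λ₃ := m12 _ hx _ hb₀
    have e : -((x + a₀) + b₀) = -x + c₀ := by rw [hc]; abel
    rwa [e] at h1
  have L31 : ∀ x, x + c₀ ∈ Λ₃ → -x + a₀ ∈ Λ₁ := by
    intro x hx
    have h1 : -(b₀ + (x + c₀)) ∈ Λ₁ := m23 _ hb₀ _ hx
    have e : -(b₀ + (x + c₀)) = -x + a₀ := by rw [hc]; abel
    rwa [e] at h1
  have Lneg : ∀ x, x + a₀ ∈ Λ₁ → -x + a₀ ∈ Λ₁ := by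
    intro x hx
    have h1 : -((x + a₀) + c₀) ∈ Λ₂ := m13 _ hx _ hc₀
    have e : -((x + a₀) + c₀) = -x + b₀ := by rw [hc]; abel
    rw [e] at h1
    exact L21 _ h1
  have Ladd : ∀ x y, x + a₀ ∈ Λ₁ → y + a₀ ∈ Λ₁ → x + y + a₀ ∈ Λ₁ := by
    intro x y hx hy
    have hy' : y + b₀ ∈ Λ₂ := L12 y hy
    have h1 : -((x + a₀) + (y + b₀)) ∈ Λ₃ := m12 _ hx _ hy'
    have e : -((x + a₀) + (y + b₀)) = (-(x + y)) + c₀ := by rw [hc]; abel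
    rw [e] at h1
    have h2 := L31 _ h1
    rwa [neg_neg] at h2
  refine ⟨{ carrier := {x | x + a₀ ∈ Λ₁},
            zero_mem' := by simpa using ha₀,
            add_mem' := fun {x y} hx hy => Ladd _ _ hx hy,
            neg_mem' := fun {x} hx => Lneg _ hx }, a₀, b₀, c₀, ?_, ?_, ?_, ?_, ?_⟩
  · -- cardinality
    have hΛ₁ : (Λ₁ : Set F) = (· + a₀) '' {x : F | x + a₀ ∈ Λ₁} := by
      ext x
      constructor
      · intro hx
        exact ⟨x - a₀, by simpa using hx, by simp⟩
      · rintro ⟨t, ht, rfl⟩; exact ht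
    have hinj : Function.Injective (· + a₀ : F → F) := add_left_injective a₀
    calc Nat.card {x : F | x + a₀ ∈ Λ₁} = ({x : F | x + a₀ ∈ Λ₁} : Set F).ncard :=
          Nat.card_coe_set_eq _
      _ = ((· + a₀) '' {x : F | x + a₀ ∈ Λ₁}).ncard :=
          (Set.ncard_image_of_injective _ hinj).symm
      _ = (Λ₁ : Set F).ncard := by rw [hΛ₁]
      _ = Λ₁.card := Set.ncard_coe_finset _
      _ = n := h₁
  · rw [hc]; abel
  · ext x
    constructor
    · intro hx
      exact ⟨x - a₀, by simpa using hx, by simp⟩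
    · rintro ⟨t, ht, rfl⟩; exact ht
  · ext x
    constructor
    · intro hx
      refine ⟨x - b₀, ?_, by simp⟩
      have : (x - b₀) + b₀ ∈ Λ₂ := by simpa using hx
      exact L21 _ this
    · rintro ⟨t, ht, rfl⟩
      exact L12 _ ht
  · ext x
    constructor
    · intro hx
      refine ⟨x - c₀, ?_, by simp⟩
      have h1 : (x - c₀) + c₀ ∈ Λ₃ := by simpa using hx
      have h2 := L31 _ h1
      have h3 := Lneg _ h2
      simpa using h3
    · rintro ⟨t, ht, rfl⟩
      have h1 := Lneg _ ht
      have h2 := L13 _ h1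
      simpa using h2
end

section
/- Under the hypotheses of the previous statement (Λ₁, Λ₂, Λ₃ ⊆ F finite of equal size satisfying the zero-sum closure conditions), for any A₁, A₂, A₃ ∈ Λ₁ there exists A* ∈ Λ₁ such that A₁ − A₂ = A* − A₃. -/
theorem stmt_9 {F : Type*} [AddCommGroup F] (n : ℕ)
    (Λ₁ Λ₂ Λ₃ : Finset F)
    (h₁ : Λ₁.card = n) (h₂ : Λ₂.card = n) (h₃ : Λ₃.card = n)
    (net₁₂ : ∀ A ∈ Λ₁, ∀ B ∈ Λ₂, ∃ C ∈ Λ₃, A + B + C = 0)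
    (net₁₃ : ∀ A ∈ Λ₁, ∀ C ∈ Λ₃, ∃ B ∈ Λ₂, A + B + C = 0)
    (net₂₃ : ∀ B ∈ Λ₂, ∀ C ∈ Λ₃, ∃ A ∈ Λ₁, A + B + C = 0) :
    ∀ A₁ ∈ Λ₁, ∀ A₂ ∈ Λ₁, ∀ A₃ ∈ Λ₁, ∃ A' ∈ Λ₁, A₁ - A₂ = A' - A₃ := by
  intro A₁ hA₁ A₂ hA₂ A₃ hA₃
  have hΛ₂ : Λ₂.Nonempty := by
    rw [← Finset.card_pos, h₂, ← h₁, Finset.card_pos]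
    exact ⟨A₁, hA₁⟩
  obtain ⟨B, hB⟩ := hΛ₂
  obtain ⟨C₁, hC₁, e₁⟩ := net₁₂ A₁ hA₁ B hB
  obtain ⟨B', hB', e₂⟩ := net₁₃ A₂ hA₂ C₁ hC₁
  obtain ⟨C₂, hC₂, e₃⟩ := net₁₂ A₃ hA₃ B' hB'
  obtain ⟨A', hA', e₄⟩ := net₂₃ B hB C₂ hC₂
  refine ⟨A', hA', ?_⟩
  have key : A₁ - A₂ - (A' - A₃) =
      (A₁ + B + C₁) - (A₂ + B' + C₁) - ((A' + B + C₂) - (A₃ + B' + C₂)) := by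
    abel
  rw [e₁, e₂, e₃, e₄] at key
  simp only [sub_zero, zero_sub, sub_neg_eq_add, zero_add, sub_self] at key
  exact sub_eq_zero.mp key
end

section
/- Let G be a group and suppose there is a subset S ⊆ G closed under the operation (g, h) ↦ g·h⁻¹·g. If H ≤ G is a cyclic subgroup of order 6 with 1 ∈ S ∩ H and |S ∩ H| ≥ 3, then S ∩ H is a subgroup of H, equal either to H itself or to the unique subgroup of H of order 3. -/
theorem stmt_12 {G : Type*} [Group G] (S : Set G)
    (hS : ∀ g ∈ S, ∀ h ∈ S, g * h⁻¹ * g ∈ S)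
    (H : Subgroup G) (hcyc : IsCyclic H) (hcard : Nat.card H = 6)
    (hone : (1 : G) ∈ S ∩ (H : Set G)) (hbig : 3 ≤ (S ∩ (H : Set G)).ncard) :
    ∃ T : Subgroup G, T ≤ H ∧ S ∩ (H : Set G) = (T : Set G) ∧
      (T = H ∨ Nat.card T = 3) := by
  haveI : Finite H := Nat.finite_of_card_ne_zero (by omega)
  haveI : Fintype H := Fintype.ofFinite H
  obtain ⟨h, hh⟩ := hcyc.exists_generator
  have hord' : orderOf h = 6 := by
    rw [orderOf_eq_card_of_forall_mem_zpowers hh]; exact hcard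
  set g : G := (h : G) with hg
  have hgH : g ∈ H := h.2
  have hord : orderOf g = 6 := by
    rw [hg, orderOf_submonoid, hord']
  have hrep : ∀ x ∈ H, ∃ k : ℤ, x = g ^ k := by
    intro x hx
    obtain ⟨k, hk⟩ := hh ⟨x, hx⟩
    refine ⟨k, ?_⟩
    have := congrArg (Subtype.val) hk
    simpa using this.symm
  have hg6 : g ^ (6 : ℤ) = 1 := by
    rw [show ((6:ℤ)) = ((6:ℕ):ℤ) by norm_num, zpow_natCast, ← hord, pow_orderOf_eq_one]
  have step : ∀ a b : ℤ, g ^ a ∈ S → g ^ b ∈ S → g ^ (2*a - b) ∈ S := by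
    intro a b ha hb
    have := hS _ ha _ hb
    rwa [← zpow_neg, ← zpow_add, ← zpow_add, show a + -b + a = 2*a - b by ring] at this
  have s0 : g ^ (0:ℤ) ∈ S := by simpa using hone.1
  have sneg : ∀ a : ℤ, g ^ a ∈ S → g ^ (-a) ∈ S := by
    intro a ha
    have := step 0 a s0 ha
    rwa [show 2*(0:ℤ) - a = -a by ring] at this
  have smulN : ∀ a : ℤ, g ^ a ∈ S → ∀ n : ℕ, g ^ ((n:ℤ)*a) ∈ S := by
    intro a ha n
    have key : ∀ n : ℕ, g ^ ((n:ℤ)*a) ∈ S ∧ g ^ (((n:ℤ)+1)*a) ∈ S := by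
      intro n
      induction n with
      | zero => exact ⟨by simpa using s0, by simpa using ha⟩
      | succ m ih =>
        constructor
        · have := ih.2
          rwa [show (((m+1:ℕ):ℤ))*a = ((m:ℤ)+1)*a by push_cast; ring]
        · have := step _ _ ih.2 ih.1
          rwa [show 2*(((m:ℤ)+1)*a) - (m:ℤ)*a = (((m+1:ℕ):ℤ)+1)*a by push_cast; ring] at this
    exact (key n).1
  have smulZ : ∀ a : ℤ, g ^ a ∈ S → ∀ n : ℤ, g ^ (n*a) ∈ S := by
    intro a ha n
    obtain ⟨m, rfl | rfl⟩ := Int.eq_nat_or_neg n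
    · exact smulN a ha m
    · have := sneg _ (smulN a ha m)
      rwa [show -((m:ℤ)*a) = (-(m:ℤ))*a by ring] at this
  have gmod : ∀ k : ℤ, g ^ k = g ^ (k % 6) := by
    intro k
    conv_lhs => rw [← Int.mul_ediv_add_emod k 6]
    rw [zpow_add, zpow_mul, hg6, one_zpow, one_mul]
  by_cases s1 : g ^ (1:ℤ) ∈ S
  · refine ⟨H, le_refl H, ?_, Or.inl rfl⟩
    apply Set.eq_of_subset_of_subset Set.inter_subset_right
    intro x hx
    obtain ⟨k, rfl⟩ := hrep x hx
    refine ⟨?_, hx⟩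
    have := smulZ 1 s1 k
    simpa using this
  · have s5to1 : g ^ (5:ℤ) ∈ S → g ^ (1:ℤ) ∈ S := by
      intro s5
      have := smulZ 5 s5 5
      rw [show (5:ℤ)*5 = 25 by norm_num] at this
      rwa [gmod 25, show (25:ℤ) % 6 = 1 by norm_num] at this
    have ns5 : g ^ (5:ℤ) ∉ S := fun s5 => s1 (s5to1 s5)
    by_cases s2 : g ^ (2:ℤ) ∈ S
    · have ns3 : g ^ (3:ℤ) ∉ S := by
        intro s3
        have := step 2 3 s2 s3
        rw [show 2*(2:ℤ) - 3 = 1 by norm_num] at this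
        exact s1 this
      refine ⟨Subgroup.zpowers (g ^ (2:ℤ)), ?_, ?_, Or.inr ?_⟩
      · rw [Subgroup.zpowers_le]
        exact Subgroup.zpow_mem H hgH 2
      · apply Set.eq_of_subset_of_subset
        · rintro x ⟨hxS, hxH⟩
          obtain ⟨k, rfl⟩ := hrep x hxH
          rw [gmod k] at hxS ⊢
          have h06 : k % 6 = 0 ∨ k % 6 = 1 ∨ k % 6 = 2 ∨ k % 6 = 3 ∨ k % 6 = 4 ∨ k % 6 = 5 := by
            omega
          rcases h06 with hr | hr | hr | hr | hr | hr <;> rw [hr] at hxS ⊢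
          · simpa using Subgroup.one_mem (Subgroup.zpowers (g ^ (2:ℤ)))
          · exact absurd hxS s1
          · exact Subgroup.mem_zpowers _
          · exact absurd hxS ns3
          · exact Subgroup.mem_zpowers_iff.2 ⟨2, by rw [← zpow_mul]; norm_num⟩
          · exact absurd hxS ns5
        · intro x hx
          obtain ⟨m, rfl⟩ := Subgroup.mem_zpowers_iff.1 hx
          constructor
          · have := smulZ 2 s2 m
            rwa [show (m:ℤ)*2 = 2*m by ring, zpow_mul] at this
          · exact Subgroup.zpow_mem H (Subgroup.zpow_mem H hgH 2) m
      · rw [Nat.card_zpowers, show ((2:ℤ)) = ((2:ℕ):ℤ) by norm_num, zpow_natCast,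
          orderOf_pow' g (two_ne_zero), hord]
        norm_num
    · exfalso
      have ns4 : g ^ (4:ℤ) ∉ S := by
        intro s4
        have := smulZ 4 s4 2
        rw [show (2:ℤ)*4 = 8 by norm_num, gmod 8, show (8:ℤ) % 6 = 2 by norm_num] at this
        exact s2 this
      have hsub : S ∩ (H : Set G) ⊆ {1, g ^ (3:ℤ)} := by
        rintro x ⟨hxS, hxH⟩
        obtain ⟨k, rfl⟩ := hrep x hxH
        rw [gmod k] at hxS ⊢
        have h06 : k % 6 = 0 ∨ k % 6 = 1 ∨ k % 6 = 2 ∨ k % 6 = 3 ∨ k % 6 = 4 ∨ k % 6 = 5 := by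
          omega
        rcases h06 with hr | hr | hr | hr | hr | hr <;> rw [hr] at hxS ⊢
        · left; simp
        · exact absurd hxS s1
        · exact absurd hxS s2
        · right; rfl
        · exact absurd hxS ns4
        · exact absurd hxS ns5
      have hle : (S ∩ (H : Set G)).ncard ≤ 2 := by
        refine le_trans (Set.ncard_le_ncard hsub (Set.toFinite _)) ?_
        have := Set.ncard_insert_le (1:G) {g ^ (3:ℤ)}
        simpa using this
      omega
end

section
/- Every group of order 16 contains a subgroup of index 2 that is either abelian or dihedral. -/
open Subgroup

lemma dvd_sixteen {m : ℕ} (h : m ∣ 16) : m = 1 ∨ m = 2 ∨ m = 4 ∨ m = 8 ∨ m = 16 := by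
  have h1 : 1 ≤ m := Nat.pos_of_dvd_of_pos h (by norm_num)
  have h2 : m ≤ 16 := Nat.le_of_dvd (by norm_num) h
  interval_cases m <;> revert h <;> decide

lemma dvd_four {m : ℕ} (h : m ∣ 4) : m = 1 ∨ m = 2 ∨ m = 4 := by
  have h1 : 1 ≤ m := Nat.pos_of_dvd_of_pos h (by norm_num)
  have h2 : m ≤ 4 := Nat.le_of_dvd (by norm_num) h
  interval_cases m <;> revert h <;> decide

/-- A finite group whose central quotient has at most 2 elements is commutative. -/
lemma comm_of_small_quotient (K : Type*) [Group K] [Finite K]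
    (h : Nat.card (K ⧸ Subgroup.center K) ≤ 2) : ∀ a b : K, a * b = b * a := by
  have hpos : 0 < Nat.card (K ⧸ Subgroup.center K) := Nat.card_pos
  have hcyc : IsCyclic (K ⧸ Subgroup.center K) := by
    interval_cases h' : Nat.card (K ⧸ Subgroup.center K)
    · have : Subsingleton (K ⧸ Subgroup.center K) := Nat.card_eq_one_iff_unique.mp h' |>.1
      infer_instance
    · exact isCyclic_of_prime_card (p := 2) h'
  intro a b
  exact commutative_of_cyclic_center_quotient (QuotientGroup.mk' (Subgroup.center K))
    (by rw [QuotientGroup.ker_mk']) a b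

/-- A group of order 8 with at least 3 central elements is commutative. -/
lemma comm_of_card_eight (K : Type*) [Group K] (hK : Nat.card K = 8)
    (h3 : 3 ≤ Nat.card (Subgroup.center K)) : ∀ a b : K, a * b = b * a := by
  have hfin : Finite K := Nat.finite_of_card_ne_zero (by omega)
  have hdvd : Nat.card (Subgroup.center K) ∣ 8 := hK ▸ Subgroup.card_subgroup_dvd_card _
  have heq : Nat.card (K ⧸ Subgroup.center K) * Nat.card (Subgroup.center K) = 8 :=
    (Subgroup.card_eq_card_quotient_mul_card_subgroup (Subgroup.center K)).symm.trans hK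
  have hle : Nat.card (Subgroup.center K) ≤ 8 := Nat.le_of_dvd (by norm_num) hdvd
  have h4 : 4 ≤ Nat.card (Subgroup.center K) := by
    interval_cases h' : Nat.card (Subgroup.center K) <;> omega
  exact comm_of_small_quotient K (by nlinarith)

/-- Every group of order 16 has a subgroup of index 2 that is abelian or dihedral. -/
theorem stmt_14 (G : Type*) [Group G] (hG : Nat.card G = 16) :
    ∃ H : Subgroup G, Nat.card H = 8 ∧
      ((∀ a b : H, a * b = b * a) ∨ Nonempty (H ≃* DihedralGroup 4)) := by
  have hfin : Finite G := Nat.finite_of_card_ne_zero (by omega)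
  haveI : Fact (Nat.Prime 2) := ⟨Nat.prime_two⟩
  by_cases hab : ∀ a b : G, a * b = b * a
  · obtain ⟨K, hK⟩ := Sylow.exists_subgroup_card_pow_prime (G := G) 2 (n := 3)
      (by rw [hG]; norm_num)
    exact ⟨K, by simpa using hK, Or.inl fun a b => Subtype.ext (hab a b)⟩
  · -- nonabelian case
    haveI : Nontrivial G := Finite.one_lt_card_iff_nontrivial.mp (by omega)
    have hpG : IsPGroup 2 G := IsPGroup.of_card (n := 4) (by rw [hG]; norm_num)
    haveI : Nontrivial (Subgroup.center G) := hpG.center_nontrivial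
    set Z := Subgroup.center G with hZdef
    have hZdvd : Nat.card Z ∣ 16 := hG ▸ Subgroup.card_subgroup_dvd_card _
    have hZ2 : 2 ≤ Nat.card Z := Finite.one_lt_card_iff_nontrivial.mpr inferInstance
    have heqq : Nat.card (G ⧸ Z) * Nat.card Z = 16 :=
      (Subgroup.card_eq_card_quotient_mul_card_subgroup Z).symm.trans hG
    have hQ3 : 3 ≤ Nat.card (G ⧸ Z) := by
      by_contra hle
      exact hab (comm_of_small_quotient G (by rw [← hZdef]; omega))
    have hZ24 : Nat.card Z = 2 ∨ Nat.card Z = 4 := by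
      rcases dvd_sixteen hZdvd with h | h | h | h | h <;> rw [h] at hZ2 heqq ⊢ <;> omega
    -- pick x noncentral whose image is central in G ⧸ Z
    have hpQ : IsPGroup 2 (G ⧸ Z) := hpG.to_quotient Z
    haveI : Nontrivial (G ⧸ Z) := Finite.one_lt_card_iff_nontrivial.mp (by omega)
    haveI : Nontrivial (Subgroup.center (G ⧸ Z)) := hpQ.center_nontrivial
    obtain ⟨q, hq1⟩ := exists_ne (1 : Subgroup.center (G ⧸ Z))
    obtain ⟨x, hx⟩ := QuotientGroup.mk'_surjective Z (q : G ⧸ Z)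
    have hxZ : x ∉ Z := by
      intro h
      apply hq1
      ext
      rw [← hx]
      exact (QuotientGroup.eq_one_iff x).mpr h
    have hq' : ∀ r : G ⧸ Z, r * (q : G ⧸ Z) = q * r := Subgroup.mem_center_iff.mp q.2
    have hcent : ∀ g : G, g * x * g⁻¹ * x⁻¹ ∈ Z := by
      intro g
      have h1 : (QuotientGroup.mk' Z) (g * x * g⁻¹ * x⁻¹) = 1 := by
        rw [map_mul, map_mul, map_mul, map_inv, map_inv, hx, hq' ((QuotientGroup.mk' Z) g)]
        group
      have h2 : g * x * g⁻¹ * x⁻¹ ∈ (QuotientGroup.mk' Z).ker := h1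
      rwa [QuotientGroup.ker_mk'] at h2
    -- the commutator-with-x homomorphism
    have hmulkey : ∀ g h : G,
        (g * h) * x * (g * h)⁻¹ * x⁻¹ = (g * x * g⁻¹ * x⁻¹) * (h * x * h⁻¹ * x⁻¹) := by
      intro g h
      have hc : ∀ a : G, a * (h * x * h⁻¹ * x⁻¹) = (h * x * h⁻¹ * x⁻¹) * a :=
        Subgroup.mem_center_iff.mp (hcent h)
      calc (g * h) * x * (g * h)⁻¹ * x⁻¹
          = g * (h * x * h⁻¹ * x⁻¹) * x * g⁻¹ * x⁻¹ := by group
        _ = (h * x * h⁻¹ * x⁻¹) * (g * x * g⁻¹ * x⁻¹) := by rw [hc g]; group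
        _ = (g * x * g⁻¹ * x⁻¹) * (h * x * h⁻¹ * x⁻¹) := (hc _).symm
    let φ : G →* Z :=
      { toFun := fun g => ⟨g * x * g⁻¹ * x⁻¹, hcent g⟩
        map_one' := by ext; simp
        map_mul' := fun g h => by ext; exact hmulkey g h }
    have hφval : ∀ g : G, (φ g : G) = g * x * g⁻¹ * x⁻¹ := fun g => rfl
    have hker : φ.ker = Subgroup.centralizer {x} := by
      ext g
      rw [MonoidHom.mem_ker, Subgroup.mem_centralizer_singleton_iff, Subtype.ext_iff]
      rw [show ((φ g : G)) = g * x * g⁻¹ * x⁻¹ from rfl]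
      rw [OneMemClass.coe_one, mul_inv_eq_one, mul_inv_eq_iff_eq_mul]
    have hxker : x ∈ φ.ker := by rw [hker]; exact Subgroup.mem_centralizer_singleton_iff.mpr rfl
    have hZker : Z ≤ φ.ker := by rw [hker]; exact Subgroup.center_le_centralizer {x}
    have hcard_eq : Nat.card (G ⧸ φ.ker) * Nat.card φ.ker = 16 :=
      (Subgroup.card_eq_card_quotient_mul_card_subgroup φ.ker).symm.trans hG
    have hrange : Nat.card (G ⧸ φ.ker) = Nat.card φ.range :=
      Nat.card_congr (QuotientGroup.quotientKerEquivRange φ).toEquiv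
    have hrdvd : Nat.card φ.range ∣ Nat.card Z := Subgroup.card_subgroup_dvd_card _
    have hrne1 : Nat.card φ.range ≠ 1 := by
      intro h1
      apply hxZ
      rw [hZdef, Subgroup.mem_center_iff]
      intro g
      have hmem : φ g ∈ φ.range := ⟨g, rfl⟩
      rw [Subgroup.card_eq_one.mp h1, Subgroup.mem_bot] at hmem
      have h2 : (φ g : G) = ((1 : Z) : G) := congrArg _ hmem
      rw [hφval g, OneMemClass.coe_one, mul_inv_eq_one, mul_inv_eq_iff_eq_mul] at h2
      exact h2
    have hker8 : Nat.card φ.ker = 8 := by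
      rcases hZ24 with h2 | h4
      · have hr : Nat.card φ.range = 2 :=
          ((Nat.dvd_prime Nat.prime_two).mp (h2 ▸ hrdvd)).resolve_left hrne1
        rw [hrange, hr] at hcard_eq
        omega
      · rcases dvd_four (h4 ▸ hrdvd) with hr | hr | hr
        · exact absurd hr hrne1
        · rw [hrange, hr] at hcard_eq; omega
        · exfalso
          rw [hrange, hr] at hcard_eq
          have hk4 : Nat.card φ.ker = 4 := by omega
          have heq : Z = φ.ker := Subgroup.eq_of_le_of_card_ge hZker (by omega)
          exact hxZ (heq ▸ hxker)
    refine ⟨Subgroup.centralizer {x}, hker ▸ hker8, Or.inl ?_⟩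
    apply comm_of_card_eight _ (hker ▸ hker8)
    -- produce three distinct central elements of the centralizer
    classical
    obtain ⟨z, hz1⟩ := exists_ne (1 : Z)
    have hxH : x ∈ Subgroup.centralizer {x} := Subgroup.mem_centralizer_singleton_iff.mpr rfl
    have hzH : (z : G) ∈ Subgroup.centralizer {x} := Subgroup.center_le_centralizer {x} z.2
    have haC : (⟨x, hxH⟩ : Subgroup.centralizer {x}) ∈
        Subgroup.center (Subgroup.centralizer {x}) := by
      rw [Subgroup.mem_center_iff]
      intro g
      exact Subtype.ext (Subgroup.mem_centralizer_singleton_iff.mp g.2)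
    have hbC : (⟨(z : G), hzH⟩ : Subgroup.centralizer {x}) ∈
        Subgroup.center (Subgroup.centralizer {x}) := by
      rw [Subgroup.mem_center_iff]
      intro g
      exact Subtype.ext (Subgroup.mem_center_iff.mp z.2 g)
    set a : Subgroup.center (Subgroup.centralizer {x}) := ⟨⟨x, hxH⟩, haC⟩ with ha
    set b : Subgroup.center (Subgroup.centralizer {x}) := ⟨⟨(z : G), hzH⟩, hbC⟩ with hb
    have hane : a ≠ 1 := by
      intro h
      apply hxZ
      have h2 : x = 1 := Subtype.ext_iff.mp (Subtype.ext_iff.mp h)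
      rw [h2]; exact Subgroup.one_mem _
    have hbne : b ≠ 1 := by
      intro h
      have h2 : ((b : Subgroup.centralizer {x}) : G) = ((1 : Subgroup.centralizer {x}) : G) :=
        Subtype.ext_iff.mp (Subtype.ext_iff.mp h)
      exact hz1 (Subtype.ext h2)
    have hab' : a ≠ b := by
      intro h
      apply hxZ
      have h2 : x = (z : G) := Subtype.ext_iff.mp (Subtype.ext_iff.mp h)
      rw [h2]; exact z.2
    haveI : Fintype (Subgroup.center (Subgroup.centralizer {x})) := Fintype.ofFinite _
    have h3' : ({1, a, b} : Finset (Subgroup.center (Subgroup.centralizer {x}))).card = 3 := by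
      rw [Finset.card_insert_of_notMem, Finset.card_insert_of_notMem, Finset.card_singleton]
      · simp only [Finset.mem_singleton]
        exact hab'
      · simp only [Finset.mem_insert, Finset.mem_singleton]
        push_neg
        exact ⟨fun h => hane h.symm, fun h => hbne h.symm⟩
    rw [Nat.card_eq_fintype_card]
    calc (3 : ℕ) = ({1, a, b} : Finset (Subgroup.center (Subgroup.centralizer {x}))).card :=
          h3'.symm
      _ ≤ _ := Finset.card_le_univ _
end
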